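/- For the family of diagrams A_{2m}^{−} containing m blocks of fragments (−1, RR_{123}) and (−1, LL_{321}) plus canceling pairs, one has ⟨S₁, A_{2m}^{−}⟩ = −2m; hence f₁(A_{2m}^{−}) = −m < 0 while f₁(A_{2m}) = m > 0, so f₁ distinguishes the two families for every m ≥ 1. -/
import Mathlib


/-- Arrow-diagram fragment type: two-arrow fragments RR, LL, RL, LR. -/
inductive Kind : Type | RR | LL | RL | LR
deriving DecidableEq

/-- A basis symbol: a fragment kind together with a permutation of the three circles. -/
structure Frag : Type where
  kind : Kind
  perm : Equiv.Perm (Fin 3)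
deriving DecidableEq

/-- The free ℤ-module on the symbols. -/
abbrev M := Frag →₀ ℤ

/-- Basis element of `M` for a given kind and permutation. -/
noncomputable def sym (k : Kind) (σ : Equiv.Perm (Fin 3)) : M := Finsupp.single ⟨k, σ⟩ 1

/-- Orthonormal bilinear pairing on `M`. -/
def pair (f g : M) : ℤ := f.sum fun b n => n * g b

/-- Reversal: (i,j,k) ↦ (k,j,i), i.e. right composition with the transposition (1 3). -/
def rev (σ : Equiv.Perm (Fin 3)) : Equiv.Perm (Fin 3) := σ * Equiv.swap 0 2

/-- Sign of a permutation as an integer. -/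
def sgn (σ : Equiv.Perm (Fin 3)) : ℤ := Equiv.Perm.sign σ

/-- The permutation (1,2,3) (identity). -/
def perm123 : Equiv.Perm (Fin 3) := 1
/-- The permutation (2,3,1). -/
def perm231 : Equiv.Perm (Fin 3) := finRotate 3
/-- The permutation (3,2,1). -/
def perm321 : Equiv.Perm (Fin 3) := Equiv.swap 0 2
/-- The permutation (1,3,2). -/
def perm132 : Equiv.Perm (Fin 3) := Equiv.swap 1 2

/-- An abstract Gauss diagram: a finite multiset of signed two-arrow fragments. -/
abbrev GaussDiagram := Multiset (ℤ × Frag)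

/-- Evaluation `⟨S, G⟩ = Σ_{(ε,b)∈G} ε·⟨S, b⟩` of a linear combination `S` on a diagram `G`. -/
noncomputable def eval (S : M) (G : GaussDiagram) : ℤ :=
  (G.map fun p => p.1 * pair S (Finsupp.single p.2 1)).sum

/-- A multiset of canceling pairs `{(+1,b),(−1,b)}`, one for each element of `P`. -/
def cancelPairs (P : Multiset Frag) : GaussDiagram :=
  P.bind fun b => {(1, b), (-1, b)}


lemma pair_single' (f : M) (b : Frag) : pair f (Finsupp.single b 1) = f b := by
  simp [pair, Finsupp.single_apply, mul_ite, Finsupp.sum_ite_eq']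
  exact fun h => h.symm

lemma eval_add' (S : M) (G H : GaussDiagram) : eval S (G + H) = eval S G + eval S H := by
  simp [eval]

lemma eval_replicate' (S : M) (n : ℕ) (p : ℤ × Frag) :
    eval S (Multiset.replicate n p) = n * (p.1 * S p.2) := by
  simp [eval, Multiset.map_replicate, Multiset.sum_replicate, pair_single', mul_comm]

lemma eval_cancel' (S : M) (P : Multiset Frag) : eval S (cancelPairs P) = 0 := by
  induction P using Multiset.induction with
  | empty => simp [eval, cancelPairs]
  | cons a s ih =>
    rw [cancelPairs, Multiset.cons_bind, eval_add', ← cancelPairs, ih]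
    simp [eval]

noncomputable def S1' : M := ∑ σ : Equiv.Perm (Fin 3), sgn σ • (sym .RR σ + sym .LL (rev σ))

lemma S1_RR' : S1' ⟨.RR, perm123⟩ = 1 := by
  simp only [S1', Finsupp.finset_sum_apply, Finsupp.smul_apply, Finsupp.add_apply, sym,
    Finsupp.single_apply, smul_eq_mul, Frag.mk.injEq]
  simp [Finset.sum_ite_eq', perm123, sgn]

lemma S1_LL' : S1' ⟨.LL, perm321⟩ = 1 := by
  simp only [S1', Finsupp.finset_sum_apply, Finsupp.smul_apply, Finsupp.add_apply, sym,
    Finsupp.single_apply, smul_eq_mul, Frag.mk.injEq]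
  have : ∀ σ : Equiv.Perm (Fin 3), rev σ = perm321 ↔ σ = 1 := by
    intro σ; constructor <;> intro h
    · have := congrArg (· * Equiv.swap 0 2) h
      simpa [rev, perm321, mul_assoc] using this
    · simp [h, rev, perm321]
  simp [this, Finset.sum_ite_eq', sgn]

/-- for `A_{2m}^{−}` built from `m` blocks `{(−1, RR_{123}), (−1, LL_{321})}`
plus canceling pairs, `⟨S₁, A_{2m}^{−}⟩ = −2m`; hence `f₁(A_{2m}^{−}) = −m < 0 < m = f₁(A_{2m})`
for every `m ≥ 1`, so `f₁` distinguishes the two families. -/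
theorem stmt15 (m : ℕ) (Apos Aneg : GaussDiagram) (P P' : Multiset Frag)
    (hApos : Apos = Multiset.replicate m ((1 : ℤ), (⟨.RR, perm123⟩ : Frag))
        + Multiset.replicate m ((1 : ℤ), (⟨.LL, perm321⟩ : Frag)) + cancelPairs P)
    (hAneg : Aneg = Multiset.replicate m ((-1 : ℤ), (⟨.RR, perm123⟩ : Frag))
        + Multiset.replicate m ((-1 : ℤ), (⟨.LL, perm321⟩ : Frag)) + cancelPairs P') :
    eval (∑ σ : Equiv.Perm (Fin 3), sgn σ • (sym .RR σ + sym .LL (rev σ))) Aneg = -(2 * m) ∧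
    (1 ≤ m →
      eval (∑ σ : Equiv.Perm (Fin 3), sgn σ • (sym .RR σ + sym .LL (rev σ))) Aneg / 2 = -(m : ℤ) ∧
      eval (∑ σ : Equiv.Perm (Fin 3), sgn σ • (sym .RR σ + sym .LL (rev σ))) Aneg / 2 < 0 ∧
      (0 : ℤ) < eval (∑ σ : Equiv.Perm (Fin 3), sgn σ • (sym .RR σ + sym .LL (rev σ))) Apos / 2) := by
  have key : ∀ (G : GaussDiagram) (Q : Multiset Frag) (e : ℤ),
      G = Multiset.replicate m ((e : ℤ), (⟨.RR, perm123⟩ : Frag))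
        + Multiset.replicate m ((e : ℤ), (⟨.LL, perm321⟩ : Frag)) + cancelPairs Q →
      eval S1' G = e * (2 * m) := by
    intro G Q e hG
    rw [hG, eval_add', eval_add', eval_replicate', eval_replicate', eval_cancel']
    simp only [S1_RR', S1_LL']
    ring
  have hneg := key Aneg P' (-1) hAneg
  have hpos := key Apos P 1 hApos
  rw [show (-1 : ℤ) * (2 * m) = -(2 * m) by ring] at hneg
  rw [show (1 : ℤ) * (2 * m) = 2 * m by ring] at hpos
  refine ⟨hneg, fun hm => ?_⟩
  rw [show (∑ σ : Equiv.Perm (Fin 3), sgn σ • (sym .RR σ + sym .LL (rev σ))) = S1' from rfl,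
    hneg, hpos]
  refine ⟨by omega, by omega, by omega⟩
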